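/- Let A be an integer m×s matrix such that the polytope P_A = conv{±v : v a column of A} has exactly 2s vertices. Then P_A is combinatorially equivalent to an s-dimensional crosspolytope if and only if A has rank s. -/

import Mathlib

open Matrix BigOperators Pointwise

/-- An abstract simplicial complex on vertex set `Fin n`. -/
structure SC (n : ℕ) where
  faces : Finset (Finset (Fin n))
  down_closed : ∀ σ ∈ faces, ∀ τ, τ ⊆ σ → τ.Nonempty → τ ∈ faces
  face_nonempty : ∀ σ ∈ faces, σ.Nonempty

namespace SC

variable {n : ℕ}

/-- `K` is `d`-dimensional. -/
def dimIs (K : SC n) (d : ℕ) : Prop :=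
  (∀ σ ∈ K.faces, σ.card ≤ d + 1) ∧ ∃ σ ∈ K.faces, σ.card = d + 1

/-- `K` is pure of dimension `d`. -/
def pure (K : SC n) (d : ℕ) : Prop :=
  ∀ σ ∈ K.faces, ∃ τ ∈ K.faces, σ ⊆ τ ∧ τ.card = d + 1

/-- The `j`-dimensional faces of `K`. -/
abbrev fdex (K : SC n) (j : ℕ) : Type := {σ : Finset (Fin n) // σ ∈ K.faces ∧ σ.card = j + 1}

end SC

/-- Entry of the simplicial boundary matrix: for a codimension-one subface `τ ⊆ σ`,
the sign `(-1)^k` where `k` is the position of the vertex removed from `σ`. -/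
def bEntry {n : ℕ} (τ σ : Finset (Fin n)) : ℤ :=
  if τ ⊆ σ ∧ σ.card = τ.card + 1 then
    ∑ v ∈ σ \ τ, (-1 : ℤ) ^ ((σ.filter fun w => w < v).card)
  else 0

/-- The boundary matrix from `(j+1)`-dimensional faces to `j`-dimensional faces,
i.e. the boundary map `∂_{j+2}`… no: `K.B j` is the map `∂` whose columns are indexed
by the `(j+1)`-faces; in homological notation `K.B (d-1)` is `∂_d`. -/
def SC.B {n : ℕ} (K : SC n) (j : ℕ) : Matrix (K.fdex j) (K.fdex (j + 1)) ℤ :=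
  fun τ σ => bEntry τ.1 σ.1

/-- Strong connectivity of a `(j+1)`-dimensional pure complex: any two facets are
connected by a chain of facets successively sharing a ridge. -/
def SC.StronglyConnected {n : ℕ} (K : SC n) (j : ℕ) : Prop :=
  ∀ a b : K.fdex (j + 1),
    Relation.ReflTransGen (fun σ σ' : K.fdex (j + 1) => (σ.1 ∩ σ'.1).card = j + 1) a b

/-- the number of facets (of a `(j+1)`-dimensional complex) containing a given ridge -/
def SC.ridgeDeg {n : ℕ} (K : SC n) (j : ℕ) (τ : K.fdex j) : ℕ :=
  (Finset.univ.filter fun σ : K.fdex (j + 1) => τ.1 ⊆ σ.1).card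

section Poly

variable {ι κ : Type*} [Fintype ι] [Fintype κ]

def dot (x y : ι → ℝ) : ℝ := ∑ i, x i * y i

/-- the columns of `A` and their negatives, as real vectors -/
def colsPM (A : Matrix ι κ ℤ) : Set (ι → ℝ) :=
  {x | ∃ j : κ, x = (fun i => (A i j : ℝ)) ∨ x = fun i => -(A i j : ℝ)}

/-- the centrally symmetric polytope `conv [A | -A]` -/
def symPoly (A : Matrix ι κ ℤ) : Set (ι → ℝ) := convexHull ℝ (colsPM A)

def intVec (x : ι → ℝ) : Prop := ∀ i, ∃ z : ℤ, x i = (z : ℝ)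

def latticePts (P : Set (ι → ℝ)) : Set (ι → ℝ) := {x ∈ P | intVec x}

/-- a set is a lattice polytope iff it is the convex hull of its lattice points -/
def IsLatticePolytope (Q : Set (ι → ℝ)) : Prop := Q = convexHull ℝ (latticePts Q)

/-- the polar dual, taken within the linear span of `P` -/
def polarIn (P : Set (ι → ℝ)) : Set (ι → ℝ) :=
  {y | y ∈ Submodule.span ℝ P ∧ ∀ x ∈ P, dot x y ≤ 1}

/-- `P` is reflexive: its polar dual (within the affine hull of `P`) is a lattice polytope -/
def IsReflexive (P : Set (ι → ℝ)) : Prop := IsLatticePolytope (polarIn P)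

/-- every lattice point of the span of `P` is an integer combination of lattice points of `P` -/
def IsSpanning (P : Set (ι → ℝ)) : Prop :=
  ∀ x : ι → ℝ, intVec x → x ∈ Submodule.span ℝ P →
    x ∈ (Submodule.span ℤ (latticePts P) : Set (ι → ℝ))

/-- the integer decomposition property -/
def IsIDP (P : Set (ι → ℝ)) : Prop :=
  ∀ k : ℕ, ∀ x : ι → ℝ, intVec x → x ∈ (k : ℝ) • P →
    ∃ f : Fin k → (ι → ℝ), (∀ i, f i ∈ latticePts P) ∧ x = ∑ i, f i

/-- combinatorial equivalence: an inclusion-order isomorphism between the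
posets of exposed faces -/
def CombEquiv (P : Set (ι → ℝ)) (Q : Set (κ → ℝ)) : Prop :=
  Nonempty ({F : Set (ι → ℝ) // IsExposed ℝ P F} ≃o {F : Set (κ → ℝ) // IsExposed ℝ Q F})

/-- unimodular equivalence: an affine isomorphism between the affine hulls which
matches up the two polytopes and the lattice points of the affine hulls -/
def UniEquiv (P : Set (ι → ℝ)) (Q : Set (κ → ℝ)) : Prop :=
  ∃ f : (ι → ℝ) →ᵃ[ℝ] (κ → ℝ),
    Set.BijOn f (affineSpan ℝ P : Set (ι → ℝ)) (affineSpan ℝ Q : Set (κ → ℝ)) ∧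
    f '' P = Q ∧
    (∀ x ∈ (affineSpan ℝ P : Set (ι → ℝ)), intVec x → intVec (f x)) ∧
    (∀ y ∈ (affineSpan ℝ Q : Set (κ → ℝ)), intVec y →
      ∃ x ∈ (affineSpan ℝ P : Set (ι → ℝ)), intVec x ∧ f x = y)

/-- the facets of a polytope: the maximal proper exposed faces -/
def polyFacets (P : Set (ι → ℝ)) : Set (Set (ι → ℝ)) :=
  {F | IsExposed ℝ P F ∧ F ⊂ P ∧ ∀ G, IsExposed ℝ P G → F ⊆ G → G ⊂ P → G = F}

/-- independence of a set of columns of a rational matrix -/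
def colsIndep (A : Matrix ι κ ℚ) (S : Set κ) : Prop :=
  LinearIndependent ℚ (fun j : S => (fun i => A i (j : κ)))

/-- `S` is a basis of the column matroid `M[A]` -/
def IsBasisSet (A : Matrix ι κ ℚ) (S : Set κ) : Prop :=
  colsIndep A S ∧ ∀ S' : Set κ, S ⊆ S' → colsIndep A S' → S' = S

end Poly

/-- the standard cross-polytope -/
def stdCross (s : ℕ) : Set (Fin s → ℝ) :=
  convexHull ℝ {x | ∃ i : Fin s, x = Pi.single i 1 ∨ x = Pi.single i (-1)}

/-- a signed incidence matrix of the cycle on `n` vertices: column `j` is `e_{j+1} - e_j` -/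
def cycMat (n : ℕ) : Matrix (Fin n) (Fin n) ℤ :=
  fun i j => (if (i : ℕ) = ((j : ℕ) + 1) % n then 1 else 0) - (if i = j then 1 else 0)

/-- a signed incidence matrix of the facet-ridge graph of a `(j+1)`-dimensional
pseudomanifold without boundary: rows are facets, columns are ridges, and the two
facets containing a ridge receive opposite signs. -/
noncomputable def SC.frg {n : ℕ} (K : SC n) (j : ℕ) :
    Matrix (K.fdex (j + 1)) (K.fdex j) ℤ :=
  fun σ τ =>
    if τ.1 ⊆ σ.1 then
      (if ∀ σ' : K.fdex (j + 1), τ.1 ⊆ σ'.1 → σ' ≠ σ →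
          (σ'.1 \ τ.1).min ≤ (σ.1 \ τ.1).min then 1 else -1)
    else 0

section Aux

open Module

variable {ι' κ' : Type*} [Fintype ι'] [Fintype κ']

private lemma rank_eq_card_iff_det' {K : Type*} [Field K] {n : Type*} [Fintype n] [DecidableEq n]
    (M : Matrix n n K) : M.rank = Fintype.card n ↔ M.det ≠ 0 := by
  rw [← isUnit_iff_ne_zero, ← Matrix.isUnit_iff_isUnit_det]
  constructor
  · intro h
    rw [Matrix.rank] at h
    have ht : LinearMap.range M.mulVecLin = ⊤ :=
      Submodule.eq_top_of_finrank_eq (by rw [h, finrank_pi])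
    rw [← Matrix.mulVec_surjective_iff_isUnit]
    intro y
    have : y ∈ LinearMap.range M.mulVecLin := by rw [ht]; trivial
    exact this
  · exact fun h => Matrix.rank_of_isUnit M h

private lemma rank_map_cast_iff' {m s : ℕ} (A : Matrix (Fin m) (Fin s) ℤ)
    {K : Type*} [Field K] [LinearOrder K] [IsStrictOrderedRing K] :
    (A.map (Int.cast : ℤ → K)).rank = s ↔ ((Aᵀ * A).det : ℤ) ≠ 0 := by
  set B := A.map (Int.cast : ℤ → K)
  have h1 : (Bᵀ * B).rank = B.rank := Matrix.rank_transpose_mul_self B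
  have h2 : (Bᵀ * B).det = (((Aᵀ * A).det : ℤ) : K) := by
    have : Bᵀ * B = (Aᵀ * A).map (Int.cast : ℤ → K) := by
      show B.transpose * B = ((Aᵀ : Matrix _ _ ℤ) * A).map (Int.castRingHom K)
      rw [Matrix.map_mul]
      rfl
    rw [this]
    show (((Aᵀ * A).map ⇑(Int.castRingHom K)).det) = _
    rw [← RingHom.mapMatrix_apply, ← RingHom.map_det]
    rfl
  constructor
  · intro h
    have : (Bᵀ * B).rank = Fintype.card (Fin s) := by rw [h1, h, Fintype.card_fin]
    have hd := (rank_eq_card_iff_det' _).mp this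
    rw [h2] at hd
    exact_mod_cast hd
  · intro h
    have : (Bᵀ * B).det ≠ 0 := by rw [h2]; exact_mod_cast h
    have := (rank_eq_card_iff_det' _).mpr this
    rw [h1, Fintype.card_fin] at this
    exact this

private lemma dim_lt_of_exposed_ssubset {P F F' : Set (ι' → ℝ)}
    (hF : IsExposed ℝ P F) (hF' : IsExposed ℝ P F')
    (hne : F.Nonempty) (hss : F ⊂ F') :
    finrank ℝ (vectorSpan ℝ F) < finrank ℝ (vectorSpan ℝ F') := by
  obtain ⟨l, hl⟩ := hF hne
  obtain ⟨x₀, hx₀⟩ := hne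
  obtain ⟨z, hzF', hzF⟩ := Set.exists_of_ssubset hss
  have hx₀' := hx₀
  rw [hl] at hx₀'
  have hzP : z ∈ P := hF'.subset hzF'
  have hzlt : l z < l x₀ := by
    by_contra h
    push_neg at h
    apply hzF
    rw [hl]
    exact ⟨hzP, fun y hy => le_trans (hx₀'.2 y hy) h⟩
  have hFH : F ⊆ (AffineSubspace.mk' x₀ (LinearMap.ker (l : (ι' → ℝ) →ₗ[ℝ] ℝ)) : Set (ι' → ℝ)) := by
    intro x hx
    have hx' := hx
    rw [hl] at hx'
    have h1 : l x = l x₀ := le_antisymm (hx₀'.2 x hx'.1) (hx'.2 x₀ hx₀'.1)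
    rw [AffineSubspace.mem_coe, AffineSubspace.mem_mk']
    simp [LinearMap.mem_ker, vsub_eq_sub, h1]
  have hzH : z ∉ affineSpan ℝ F := by
    intro hz
    have : z ∈ AffineSubspace.mk' x₀ (LinearMap.ker (l : (ι' → ℝ) →ₗ[ℝ] ℝ)) := by
      have hle : affineSpan ℝ F ≤ AffineSubspace.mk' x₀ (LinearMap.ker (l : (ι' → ℝ) →ₗ[ℝ] ℝ)) :=
        affineSpan_le.mpr hFH
      exact hle hz
    rw [AffineSubspace.mem_mk'] at this
    simp only [LinearMap.mem_ker, vsub_eq_sub, map_sub, sub_eq_zero] at this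
    exact absurd this (ne_of_lt hzlt)
  have hlt : affineSpan ℝ F < affineSpan ℝ F' := by
    refine lt_of_le_of_ne (affineSpan_mono ℝ hss.subset) ?_
    intro h
    exact hzH (h ▸ subset_affineSpan ℝ F' hzF')
  have hFne : (affineSpan ℝ F : Set (ι' → ℝ)).Nonempty := (affineSpan_nonempty ℝ).mpr ⟨x₀, hx₀⟩
  have hdir : (affineSpan ℝ F).direction < (affineSpan ℝ F').direction :=
    AffineSubspace.direction_lt_of_nonempty hlt hFne
  rw [direction_affineSpan, direction_affineSpan] at hdir
  exact Submodule.finrank_lt_finrank_of_lt hdir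

private lemma chain_dim {P : Set (ι' → ℝ)} (G : ℕ → Set (ι' → ℝ)) :
    ∀ s : ℕ, (∀ i ≤ s, IsExposed ℝ P (G i)) → (G 0).Nonempty →
    (∀ i < s, G i ⊂ G (i + 1)) →
    s ≤ finrank ℝ (vectorSpan ℝ (G s)) ∧ (G s).Nonempty := by
  intro s
  induction s with
  | zero => exact fun _ h _ => ⟨Nat.zero_le _, h⟩
  | succ n ih =>
    intro hexp hne hss
    obtain ⟨hn, hGn⟩ := ih (fun i hi => hexp i (hi.trans (Nat.le_succ n))) hne
      (fun i hi => hss i (hi.trans (Nat.lt_succ_self n)))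
    have hlt := dim_lt_of_exposed_ssubset (hexp n (Nat.le_succ n))
      (hexp (n+1) le_rfl) hGn (hss n (Nat.lt_succ_self n))
    refine ⟨by omega, ?_⟩
    obtain ⟨z, hz, _⟩ := Set.exists_of_ssubset (hss n (Nat.lt_succ_self n))
    exact ⟨z, hz⟩

private lemma faceIso_of_image (T : (ι' → ℝ) →ₗ[ℝ] (κ' → ℝ)) (hT : Function.Injective T)
    (Q : Set (ι' → ℝ)) :
    Nonempty ({F : Set (ι' → ℝ) // IsExposed ℝ Q F} ≃o
      {G : Set (κ' → ℝ) // IsExposed ℝ (T '' Q) G}) := by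
  obtain ⟨g, hg⟩ := T.exists_leftInverse_of_injective (LinearMap.ker_eq_bot.mpr hT)
  have hgT : ∀ x, g (T x) = x := fun x => by
    have := LinearMap.congr_fun hg x; simpa using this
  refine ⟨⟨⟨fun F => ⟨T '' F.1, ?_⟩, fun G => ⟨T ⁻¹' G.1 ∩ Q, ?_⟩, ?_, ?_⟩, ?_⟩⟩
  · intro hne
    obtain ⟨l, hl⟩ := F.2 (Set.image_nonempty.mp hne)
    refine ⟨l.comp (LinearMap.toContinuousLinearMap g), ?_⟩
    ext y
    constructor
    · rintro ⟨x, hxF, rfl⟩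
      rw [hl] at hxF
      refine ⟨Set.mem_image_of_mem T hxF.1, ?_⟩
      rintro z ⟨w, hwQ, rfl⟩
      simp only [ContinuousLinearMap.comp_apply, LinearMap.coe_toContinuousLinearMap', hgT]
      exact hxF.2 w hwQ
    · rintro ⟨⟨x, hxQ, rfl⟩, hmax⟩
      refine ⟨x, ?_, rfl⟩
      rw [hl]
      refine ⟨hxQ, fun w hwQ => ?_⟩
      have := hmax (T w) (Set.mem_image_of_mem T hwQ)
      simpa [hgT] using this
  · intro hne
    obtain ⟨x, hxG, hxQ⟩ := hne
    obtain ⟨l, hl⟩ := G.2 ⟨T x, hxG⟩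
    refine ⟨l.comp (LinearMap.toContinuousLinearMap T), ?_⟩
    ext u
    simp only [Set.mem_inter_iff, Set.mem_preimage, Set.mem_setOf_eq,
      ContinuousLinearMap.comp_apply, LinearMap.coe_toContinuousLinearMap']
    constructor
    · rintro ⟨huG, huQ⟩
      rw [hl] at huG
      exact ⟨huQ, fun y hyQ => huG.2 (T y) (Set.mem_image_of_mem T hyQ)⟩
    · rintro ⟨huQ, hmax⟩
      refine ⟨?_, huQ⟩
      rw [hl]
      refine ⟨Set.mem_image_of_mem T huQ, ?_⟩
      rintro z ⟨w, hwQ, rfl⟩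
      exact hmax w hwQ
  · rintro ⟨F, hF⟩
    ext x
    simp only [Set.mem_inter_iff, Set.mem_preimage]
    constructor
    · rintro ⟨hxF, _⟩
      exact hT.mem_set_image.mp hxF
    · intro hxF
      exact ⟨Set.mem_image_of_mem T hxF, hF.subset hxF⟩
  · rintro ⟨G, hG⟩
    ext y
    constructor
    · rintro ⟨x, ⟨hxG, _⟩, rfl⟩
      exact hxG
    · intro hyG
      obtain ⟨x, hxQ, rfl⟩ := hG.subset hyG
      exact ⟨x, ⟨hyG, hxQ⟩, rfl⟩
  · intro F F'
    exact Set.image_subset_image_iff hT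

/-- the partial-sum functionals on `Fin s → ℝ` -/
noncomputable def Lk (s k : ℕ) : (Fin s → ℝ) →L[ℝ] ℝ :=
  ∑ j ∈ Finset.univ.filter (fun j : Fin s => (j : ℕ) < k), ContinuousLinearMap.proj j

/-- the chain of faces of the standard crosspolytope -/
noncomputable def Dface (s i : ℕ) : Set (Fin s → ℝ) :=
  if i < s then {x ∈ stdCross s | ∀ y ∈ stdCross s, Lk s (i+1) y ≤ Lk s (i+1) x}
  else stdCross s

lemma Lk_apply (s k : ℕ) (z : Fin s → ℝ) :
    Lk s k z = ∑ j ∈ Finset.univ.filter (fun j : Fin s => (j : ℕ) < k), z j := by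
  simp [Lk, ContinuousLinearMap.sum_apply, ContinuousLinearMap.proj_apply]

lemma Lk_single (s k : ℕ) (i : Fin s) (c : ℝ) :
    Lk s k (Pi.single i c) = if (i : ℕ) < k then c else 0 := by
  rw [Lk_apply, Finset.sum_pi_single']
  simp

lemma le_on_stdCross {s : ℕ} (l : (Fin s → ℝ) →L[ℝ] ℝ)
    (h : ∀ i : Fin s, l (Pi.single i 1) ≤ 1 ∧ l (Pi.single i (-1)) ≤ 1) :
    ∀ y ∈ stdCross s, l y ≤ 1 := by
  intro y hy
  have hsub : stdCross s ⊆ {y | l y ≤ 1} := by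
    apply convexHull_min
    · rintro x ⟨i, (rfl | rfl)⟩
      exacts [(h i).1, (h i).2]
    · exact convex_halfSpace_le (l : (Fin s → ℝ) →ₗ[ℝ] ℝ).isLinear 1
  exact hsub hy

end Aux

lemma Lk_succ (s k : ℕ) (hk : k < s) (z : Fin s → ℝ) :
    Lk s (k+1) z = Lk s k z + z ⟨k, hk⟩ := by
  rw [Lk_apply, Lk_apply]
  have hins : (Finset.univ.filter fun j : Fin s => (j : ℕ) < k + 1)
      = insert (⟨k, hk⟩ : Fin s) (Finset.univ.filter fun j : Fin s => (j : ℕ) < k) := by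
    ext j
    simp only [Finset.mem_filter, Finset.mem_univ, true_and, Finset.mem_insert, Fin.ext_iff]
    omega
  rw [hins, Finset.sum_insert (by simp)]
  ring

/-- Let `A` be an integer `m × s` matrix such that
`P_A = conv{±columns of A}` has exactly `2s` vertices. Then `P_A` is combinatorially
equivalent to an `s`-dimensional crosspolytope iff `A` has rank `s`. -/
theorem stmt0 (m s : ℕ) (A : Matrix (Fin m) (Fin s) ℤ)
    (hv : (Set.extremePoints ℝ (symPoly A)).ncard = 2 * s) :
    CombEquiv (symPoly A) (stdCross s) ↔ (A.map (Int.cast : ℤ → ℚ)).rank = s := by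
  classical
  have hrank_iff : (A.map (Int.cast : ℤ → ℝ)).rank = s ↔ (A.map (Int.cast : ℤ → ℚ)).rank = s := by
    rw [rank_map_cast_iff' A (K := ℝ), rank_map_cast_iff' A (K := ℚ)]
  constructor
  · intro hc
    rw [← hrank_iff]
    rcases Nat.eq_zero_or_pos s with hs | spos
    · subst hs
      have h0 := (A.map (Int.cast : ℤ → ℝ)).rank_le_card_width
      simpa using h0
    · obtain ⟨e⟩ := hc
      have zlt : (0 : ℕ) < s := spos
      set e₀ : Fin s → ℝ := Pi.single (⟨0, spos⟩ : Fin s) 1 with he₀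
      have he₀Q : e₀ ∈ stdCross s :=
        subset_convexHull ℝ _ ⟨⟨0, spos⟩, Or.inl rfl⟩
      have hLub : ∀ k, ∀ y ∈ stdCross s, Lk s k y ≤ 1 := by
        intro k
        apply le_on_stdCross
        intro i
        rw [Lk_single, Lk_single]
        constructor <;> split_ifs <;> norm_num
      have hLe₀ : ∀ k, 1 ≤ k → Lk s k e₀ = 1 := by
        intro k hk
        rw [he₀, Lk_single, if_pos (by simp; omega)]
      have hDexp : ∀ i, IsExposed ℝ (stdCross s) (Dface s i) := by
        intro i
        by_cases hi : i < s
        · simp only [Dface, if_pos hi]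
          exact fun _ => ⟨Lk s (i+1), rfl⟩
        · simp only [Dface, if_neg hi]
          exact IsExposed.refl (stdCross s)
      have hD0mem : e₀ ∈ Dface s 0 := by
        simp only [Dface, if_pos spos]
        exact ⟨he₀Q, fun y hy => by rw [hLe₀ 1 le_rfl]; exact hLub 1 y hy⟩
      have hchain : ∀ i < s, Dface s i ⊂ Dface s (i + 1) := by
        intro i hi
        have hsubs : Dface s i ⊆ Dface s (i+1) := by
          intro x hx
          simp only [Dface, if_pos hi, Set.mem_setOf_eq] at hx
          obtain ⟨hxQ, hxmax⟩ := hx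
          have hx1 : Lk s (i+1) x = 1 := by
            refine le_antisymm (hLub _ x hxQ) ?_
            have h1 := hxmax e₀ he₀Q
            rwa [hLe₀ (i+1) (by omega)] at h1
          by_cases hi1 : i + 1 < s
          · set pj : (Fin s → ℝ) →L[ℝ] ℝ :=
              ContinuousLinearMap.proj (R := ℝ) (φ := fun _ : Fin s => ℝ) ⟨i+1, hi1⟩ with hpj
            have hpja : ∀ z : Fin s → ℝ, pj z = z ⟨i+1, hi1⟩ := fun z => rfl
            have hval : ∀ (j : Fin s) (c : ℝ),
                (Lk s (i+1) + pj) (Pi.single j c)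
                  = (if (j : ℕ) < i + 1 then c else 0)
                    + (if (⟨i+1, hi1⟩ : Fin s) = j then c else 0) := by
              intro j c
              rw [ContinuousLinearMap.add_apply, Lk_single, hpja, Pi.single_apply]
            have hval' : ∀ (j : Fin s) (c : ℝ),
                (Lk s (i+1) - pj) (Pi.single j c)
                  = (if (j : ℕ) < i + 1 then c else 0)
                    - (if (⟨i+1, hi1⟩ : Fin s) = j then c else 0) := by
              intro j c
              rw [ContinuousLinearMap.sub_apply, Lk_single, hpja, Pi.single_apply]
            have hplus : Lk s (i+1) x + x ⟨i+1, hi1⟩ ≤ 1 := by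
              have hb := le_on_stdCross (Lk s (i+1) + pj) ?_ x hxQ
              · rw [ContinuousLinearMap.add_apply, hpja] at hb
                exact hb
              · intro j
                by_cases hj : j = (⟨i+1, hi1⟩ : Fin s)
                · subst hj
                  constructor <;> (rw [hval]; norm_num)
                · rw [hval, hval, if_neg (Ne.symm hj), if_neg (Ne.symm hj)]
                  constructor <;> split_ifs <;> norm_num
            have hminus : Lk s (i+1) x - x ⟨i+1, hi1⟩ ≤ 1 := by
              have hb := le_on_stdCross (Lk s (i+1) - pj) ?_ x hxQ
              · rw [ContinuousLinearMap.sub_apply, hpja] at hb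
                exact hb
              · intro j
                by_cases hj : j = (⟨i+1, hi1⟩ : Fin s)
                · subst hj
                  constructor <;> (rw [hval']; norm_num)
                · rw [hval', hval', if_neg (Ne.symm hj), if_neg (Ne.symm hj)]
                  constructor <;> split_ifs <;> norm_num
            have hxk : x ⟨i+1, hi1⟩ = 0 := by linarith
            simp only [Dface, if_pos hi1, Set.mem_setOf_eq]
            refine ⟨hxQ, fun y hy => ?_⟩
            rw [Lk_succ s (i+1) hi1 x, hx1, hxk]
            simpa using hLub (i+2) y hy
          · simp only [Dface, if_neg hi1]
            exact hxQ
        rw [Set.ssubset_iff_of_subset hsubs]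
        by_cases hi1 : i + 1 < s
        · refine ⟨Pi.single (⟨i+1, hi1⟩ : Fin s) 1, ?_, ?_⟩
          · simp only [Dface, if_pos hi1, Set.mem_setOf_eq]
            have hmQ : Pi.single (⟨i+1, hi1⟩ : Fin s) 1 ∈ stdCross s :=
              subset_convexHull ℝ _ ⟨_, Or.inl rfl⟩
            refine ⟨hmQ, fun y hy => ?_⟩
            rw [Lk_single, if_pos (by simp)]
            exact hLub _ y hy
          · simp only [Dface, if_pos hi, Set.mem_setOf_eq]
            rintro ⟨hQm, hmax⟩
            have h1 := hmax e₀ he₀Q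
            rw [hLe₀ (i+1) (by omega), Lk_single, if_neg (by simp)] at h1
            linarith
        · refine ⟨Pi.single (⟨0, spos⟩ : Fin s) (-1), ?_, ?_⟩
          · simp only [Dface, if_neg hi1]
            exact subset_convexHull ℝ _ ⟨_, Or.inr rfl⟩
          · simp only [Dface, if_pos hi, Set.mem_setOf_eq]
            rintro ⟨hQm, hmax⟩
            have h1 := hmax e₀ he₀Q
            rw [hLe₀ (i+1) (by omega), Lk_single, if_pos (by simpa using hi)] at h1
            linarith
      -- transfer the chain through the order isomorphism
      set Dex : ℕ → {F : Set (Fin s → ℝ) // IsExposed ℝ (stdCross s) F} :=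
        fun i => ⟨Dface s i, hDexp i⟩ with hDex
      set G : ℕ → Set (Fin m → ℝ) := fun i => (e.symm (Dex i)).1 with hG
      have hGexp : ∀ i, IsExposed ℝ (symPoly A) (G i) := fun i => (e.symm (Dex i)).2
      have hGss : ∀ i < s, G i ⊂ G (i + 1) := by
        intro i hi
        have h1 : Dex i < Dex (i+1) :=
          Subtype.mk_lt_mk.mpr (Set.lt_iff_ssubset.mpr (hchain i hi))
        have h2 : e.symm (Dex i) < e.symm (Dex (i+1)) := (OrderIso.lt_iff_lt e.symm).mpr h1
        exact Set.lt_iff_ssubset.mp (Subtype.coe_lt_coe.mpr h2)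
      have hG0ne : (G 0).Nonempty := by
        have hbot : (⟨∅, fun h => absurd h Set.not_nonempty_empty⟩ :
            {F : Set (Fin s → ℝ) // IsExposed ℝ (stdCross s) F}) < Dex 0 := by
          refine Subtype.mk_lt_mk.mpr (Set.lt_iff_ssubset.mpr ?_)
          rw [Set.ssubset_iff_of_subset (Set.empty_subset _)]
          exact ⟨e₀, hD0mem, Set.notMem_empty e₀⟩
        have h2 := (OrderIso.lt_iff_lt e.symm).mpr hbot
        have h3 := Set.lt_iff_ssubset.mp (Subtype.coe_lt_coe.mpr h2)
        obtain ⟨z, hz, -⟩ := Set.exists_of_ssubset h3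
        exact ⟨z, hz⟩
      obtain ⟨hdim, -⟩ := chain_dim G s (fun i _ => hGexp i) hG0ne hGss
      have hsub : G s ⊆ symPoly A := (hGexp s).subset
      have h1 : vectorSpan ℝ (G s) ≤ vectorSpan ℝ (symPoly A) := vectorSpan_mono ℝ hsub
      have hPr : symPoly A ⊆
          (LinearMap.range (A.map (Int.cast : ℤ → ℝ)).mulVecLin : Set (Fin m → ℝ)) := by
        apply convexHull_min _ (LinearMap.range (A.map (Int.cast : ℤ → ℝ)).mulVecLin).convex
        rintro x ⟨j, (rfl | rfl)⟩
        · exact ⟨Pi.single j 1, by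
            funext i; simp [Matrix.mulVecLin_apply, Matrix.mulVec_single, Matrix.map_apply]⟩
        · exact ⟨Pi.single j (-1), by
            funext i; simp [Matrix.mulVecLin_apply, Matrix.mulVec_single, Matrix.map_apply]⟩
      have h2 : vectorSpan ℝ (symPoly A) ≤ LinearMap.range (A.map (Int.cast : ℤ → ℝ)).mulVecLin := by
        rw [vectorSpan_def]
        apply Submodule.span_le.mpr
        intro v hv
        rw [Set.mem_vsub] at hv
        obtain ⟨x, hx, y, hy, rfl⟩ := hv
        exact sub_mem (hPr hx) (hPr hy)
      have hfin : s ≤ Module.finrank ℝ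
          (LinearMap.range (A.map (Int.cast : ℤ → ℝ)).mulVecLin) :=
        le_trans hdim (le_trans (Submodule.finrank_mono h1) (Submodule.finrank_mono h2))
      have hle : (A.map (Int.cast : ℤ → ℝ)).rank ≤ s :=
        le_trans (A.map (Int.cast : ℤ → ℝ)).rank_le_card_width (by simp)
      exact le_antisymm hle hfin
  · intro hr
    have hArr : (A.map (Int.cast : ℤ → ℝ)).rank = s := hrank_iff.mpr hr
    set T := (A.map (Int.cast : ℤ → ℝ)).mulVecLin with hT
    have hker : LinearMap.ker T = ⊥ := by
      have h1 := LinearMap.finrank_range_add_finrank_ker T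
      have h2 : Module.finrank ℝ (LinearMap.range T) = s := hArr
      rw [h2, Module.finrank_fin_fun ℝ] at h1
      have h3 : Module.finrank ℝ (LinearMap.ker T) = 0 := by omega
      exact Submodule.finrank_eq_zero.mp h3
    have hinj : Function.Injective T := LinearMap.ker_eq_bot.mp hker
    have himg : symPoly A = T '' stdCross s := by
      rw [stdCross, symPoly, LinearMap.image_convexHull]
      congr 1
      ext x
      constructor
      · rintro ⟨j, (rfl | rfl)⟩
        · exact ⟨Pi.single j 1, ⟨j, Or.inl rfl⟩, by
            funext i; simp [hT, Matrix.mulVecLin_apply, Matrix.mulVec_single, Matrix.map_apply]⟩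
        · exact ⟨Pi.single j (-1), ⟨j, Or.inr rfl⟩, by
            funext i; simp [hT, Matrix.mulVecLin_apply, Matrix.mulVec_single, Matrix.map_apply]⟩
      · rintro ⟨v, ⟨i, (rfl | rfl)⟩, rfl⟩
        · exact ⟨i, Or.inl (by
            funext r; simp [hT, Matrix.mulVecLin_apply, Matrix.mulVec_single, Matrix.map_apply])⟩
        · exact ⟨i, Or.inr (by
            funext r; simp [hT, Matrix.mulVecLin_apply, Matrix.mulVec_single, Matrix.map_apply])⟩
    obtain ⟨eiso⟩ := faceIso_of_image T hinj (stdCross s)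
    show Nonempty _
    rw [himg]
    exact ⟨eiso.symm⟩
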